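/- A linear map E on M_n(ℂ) is completely positive if and only if its Choi matrix J(E) is positive semidefinite. -/

import Mathlib

open scoped Matrix ComplexOrder

/-- The extension `E ⊗ id_k` of a linear map on `n × n` matrices to
`(n·k) × (n·k)` matrices, acting blockwise. -/
noncomputable def matExt {n : ℕ} (k : ℕ)
    (E : Matrix (Fin n) (Fin n) ℂ →ₗ[ℂ] Matrix (Fin n) (Fin n) ℂ) :
    Matrix (Fin n × Fin k) (Fin n × Fin k) ℂ →
      Matrix (Fin n × Fin k) (Fin n × Fin k) ℂ :=
  fun A p q => E (fun i j => A (i, p.2) (j, q.2)) p.1 q.1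

/-- Complete positivity: all extensions `E ⊗ id_k` preserve positive
semidefiniteness. -/
def IsCompletelyPositive {n : ℕ}
    (E : Matrix (Fin n) (Fin n) ℂ →ₗ[ℂ] Matrix (Fin n) (Fin n) ℂ) : Prop :=
  ∀ (k : ℕ) (A : Matrix (Fin n × Fin k) (Fin n × Fin k) ℂ),
    A.PosSemidef → (matExt k E A).PosSemidef

/-- Trace preservation. -/
def IsTracePreserving {n : ℕ}
    (E : Matrix (Fin n) (Fin n) ℂ →ₗ[ℂ] Matrix (Fin n) (Fin n) ℂ) : Prop :=
  ∀ A : Matrix (Fin n) (Fin n) ℂ, (E A).trace = A.trace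

/-- A quantum channel: completely positive and trace-preserving. -/
def IsCPTP {n : ℕ}
    (E : Matrix (Fin n) (Fin n) ℂ →ₗ[ℂ] Matrix (Fin n) (Fin n) ℂ) : Prop :=
  IsCompletelyPositive E ∧ IsTracePreserving E
/-- The Choi matrix `J(E) = ∑ i j, E(E_{ij}) ⊗ E_{ij}
  = (E ⊗ id)(|Φ⟩⟨Φ|)` of a linear map on `n × n` matrices,
where `|Φ⟩ = ∑ i, |i⟩ ⊗ |i⟩` is the unnormalized maximally entangled
vector and `E_{ij}` are the matrix units. -/
noncomputable def choi {n : ℕ}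
    (E : Matrix (Fin n) (Fin n) ℂ →ₗ[ℂ] Matrix (Fin n) (Fin n) ℂ) :
    Matrix (Fin n × Fin n) (Fin n × Fin n) ℂ :=
  fun p q => E (Matrix.single p.2 q.2 1) p.1 q.1

/-- A finite sum of positive semidefinite matrices is positive semidefinite. -/
lemma posSemidef_sum {m : Type*} [Fintype m] {ι : Type*} (s : Finset ι)
    (f : ι → Matrix m m ℂ) (h : ∀ i ∈ s, (f i).PosSemidef) :
    (∑ i ∈ s, f i).PosSemidef := by
  classical
  refine Finset.sum_induction f (·.PosSemidef) (fun a b ha hb => ?_) ?_ h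
  · exact ⟨ha.1.add hb.1, fun x => by
      simpa [mul_add, add_mul] using add_nonneg (ha.2 x) (hb.2 x)⟩
  · exact ⟨Matrix.isHermitian_zero, fun x => by simp⟩

/-- **Choi's theorem.**  A linear map on `M_n(ℂ)` is completely positive if
and only if its Choi matrix is positive semidefinite. -/
theorem choi_theorem {n : ℕ}
    (E : Matrix (Fin n) (Fin n) ℂ →ₗ[ℂ] Matrix (Fin n) (Fin n) ℂ) :
    IsCompletelyPositive E ↔ (choi E).PosSemidef := by
  constructor
  · -- CP ⇒ Choi matrix PSD
    intro h
    set v : Fin n × Fin n → ℂ := fun p => if p.1 = p.2 then 1 else 0 with hv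
    set M : Matrix (Fin n × Fin n) (Fin n × Fin n) ℂ := Matrix.vecMulVec v (star v) with hM
    have hMpsd : M.PosSemidef := by
      rw [hM, Matrix.vecMulVec_eq (Fin 1), ← Matrix.conjTranspose_replicateCol]
      exact Matrix.posSemidef_self_mul_conjTranspose _
    have key : choi E = matExt n E M := by
      funext p q
      show E (Matrix.single p.2 q.2 1) p.1 q.1
          = E (fun i j => M (i, p.2) (j, q.2)) p.1 q.1
      have : (fun i j => M (i, p.2) (j, q.2)) = Matrix.single p.2 q.2 (1:ℂ) := by
        funext i j
        by_cases h1 : i = p.2 <;> by_cases h2 : j = q.2 <;>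
          simp [hM, hv, Matrix.vecMulVec_apply, Matrix.single, h1, h2, eq_comm]
      rw [this]
    rw [key]
    exact h n M hMpsd
  · -- Choi matrix PSD ⇒ CP
    intro h k A hA
    obtain ⟨B, hB⟩ : ∃ B : Matrix (Fin n × Fin n) (Fin n × Fin n) ℂ, choi E = Bᴴ * B := by
      open scoped MatrixOrder in exact CStarAlgebra.nonneg_iff_eq_star_mul_self.mp h.nonneg
    set K : (Fin n × Fin n) → Matrix (Fin n × Fin k) (Fin n × Fin k) ℂ :=
      fun r => fun p q =>
        (starRingEnd ℂ) (B r (p.1, q.1)) * (if p.2 = q.2 then 1 else 0) with hK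
    have key : matExt k E A = ∑ r : Fin n × Fin n, K r * A * (K r)ᴴ := by
      funext p q
      have hX : (fun i j => A (i, p.2) (j, q.2)) =
          ∑ i : Fin n, ∑ j : Fin n,
            A (i, p.2) (j, q.2) • Matrix.single i j (1 : ℂ) := by
        conv_lhs => rw [Matrix.matrix_eq_sum_single (fun i j => A (i, p.2) (j, q.2))]
        simp [Matrix.smul_single]
        rfl
      have hchoi : ∀ i j : Fin n, E (Matrix.single i j 1) p.1 q.1
          = ∑ r : Fin n × Fin n,
            (starRingEnd ℂ) (B r (p.1, i)) * B r (q.1, j) := by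
        intro i j
        have : E (Matrix.single i j 1) p.1 q.1 = choi E (p.1, i) (q.1, j) := rfl
        rw [this, hB]
        simp [Matrix.mul_apply, Matrix.conjTranspose_apply]
      show E (fun i j => A (i, p.2) (j, q.2)) p.1 q.1 = _
      rw [hX]
      rw [map_sum]
      simp only [map_sum, map_smul, Matrix.sum_apply, Matrix.smul_apply, smul_eq_mul]
      simp only [hchoi]
      -- Now expand the RHS
      have hRHS : ∀ r : Fin n × Fin n, (K r * A * (K r)ᴴ) p q
          = ∑ j : Fin n, ∑ i : Fin n,
            (starRingEnd ℂ) (B r (p.1, i)) * A (i, p.2) (j, q.2) * B r (q.1, j) := by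
        intro r
        simp only [Matrix.mul_apply, Matrix.conjTranspose_apply, Fintype.sum_prod_type]
        simp only [Matrix.mul_apply, Matrix.conjTranspose_apply, hK, Fintype.sum_prod_type]
        simp only [map_mul, RingHomCompTriple.comp_apply, RingHom.id_apply, starRingEnd_apply,
          star_star, mul_ite, mul_one, mul_zero, ite_mul, one_mul, zero_mul,
          apply_ite (star : ℂ → ℂ), star_one, star_zero, Finset.sum_ite_eq,
          Finset.sum_ite_eq', Finset.mem_univ, if_true]
        refine Finset.sum_congr rfl fun j _ => ?_
        rw [Finset.sum_mul]
      simp only [Matrix.sum_apply, hRHS]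
      simp only [Finset.mul_sum]
      rw [Finset.sum_comm]
      conv_rhs => rw [Finset.sum_comm]
      refine Finset.sum_congr rfl fun j _ => ?_
      rw [Finset.sum_comm]
      refine Finset.sum_congr rfl fun r _ => Finset.sum_congr rfl fun i _ => ?_
      ring
    rw [key]
    exact posSemidef_sum _ _ fun r _ => hA.mul_mul_conjTranspose_same (K r)
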